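/- Let τ ∈ S₃ be a 3-cycle and H₂ = ι + τ + τ² ∈ F₂[S₃]. Then the quotient F₂[S₃]/(H₂) by the two-sided ideal generated by H₂ is isomorphic as a ring to the ring M₂(F₂) of 2×2 matrices over F₂. -/

import Mathlib

set_option maxHeartbeats 1000000

namespace H2Aux

abbrev G := Equiv.Perm (Fin 3)
abbrev R2 := MonoidAlgebra (ZMod 2) G
abbrev M2 := Matrix (Fin 2) (Fin 2) (ZMod 2)

def vv : Fin 3 → (Fin 2 → ZMod 2) := ![![1,0],![0,1],![1,1]]

def fmat (σ : G) : M2 := Matrix.of fun i j => vv (σ (Fin.castSucc j)) i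

def F : G →* M2 where
  toFun := fmat
  map_one' := by decide
  map_mul' := by decide

noncomputable def Φ : R2 →ₐ[ZMod 2] M2 := MonoidAlgebra.lift (ZMod 2) M2 G F

def s0 : G := Equiv.swap 0 1
def a02 : G := Equiv.swap 0 2
def b12 : G := Equiv.swap 1 2
def c3 : G := Equiv.swap 0 1 * Equiv.swap 1 2

lemma key : ∀ t : G, t ^ 3 = 1 → t ≠ 1 →
    (1 : M2) + fmat t + fmat (t ^ 2) = 0 := by decide

lemma matRepr : ∀ a b c d : ZMod 2,
    a • (fmat s0 + fmat (c3 * c3)) + b • (fmat 1 + fmat b12)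
      + c • (fmat 1 + fmat a02) + d • (fmat s0 + fmat c3)
      = Matrix.of ![![a, b], ![c, d]] := by decide

lemma enum6 : ∀ t : G, t ^ 3 = 1 → t ≠ 1 → ∀ g : G,
    g = 1 ∨ g = t ∨ g = t ^ 2 ∨ g = s0 ∨ g = s0 * t ∨ g = s0 * t ^ 2 := by decide

lemma F_apply (g : G) : F g = fmat g := rfl

lemma Phi_of (g : G) : Φ (MonoidAlgebra.of (ZMod 2) G g) = fmat g := by
  simp [Φ, MonoidAlgebra.lift_of, F_apply]

lemma Phi_surj : Function.Surjective Φ := by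
  intro m
  refine ⟨m 0 0 • (MonoidAlgebra.of (ZMod 2) G s0 + MonoidAlgebra.of (ZMod 2) G (c3 * c3))
      + m 0 1 • (MonoidAlgebra.of (ZMod 2) G 1 + MonoidAlgebra.of (ZMod 2) G b12)
      + m 1 0 • (MonoidAlgebra.of (ZMod 2) G 1 + MonoidAlgebra.of (ZMod 2) G a02)
      + m 1 1 • (MonoidAlgebra.of (ZMod 2) G s0 + MonoidAlgebra.of (ZMod 2) G c3), ?_⟩
  simp only [map_add, map_smul, Phi_of]
  rw [matRepr]
  ext i j
  fin_cases i <;> fin_cases j <;> rfl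

lemma two (a : R2) : a + a = 0 := by
  have h : ((2 : ZMod 2) : ZMod 2) • a = a + a := two_smul (ZMod 2) a
  rw [show (2 : ZMod 2) = 0 from rfl, zero_smul] at h
  exact h.symm

lemma neg_eq (a : R2) : -a = a := neg_eq_of_add_eq_zero_left (two a)

end H2Aux

open H2Aux

/-- For a 3-cycle `τ ∈ S₃`, the quotient of `𝔽₂[S₃]` by the two-sided ideal generated by
`H₂ = ι + τ + τ²` is isomorphic as a ring to `M₂(𝔽₂)`. -/
theorem quotient_by_H2_iso_matrix
    (τ : Equiv.Perm (Fin 3)) (hτ : τ.IsThreeCycle) :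
    Nonempty
      (((TwoSidedIdeal.span
          {(1 : MonoidAlgebra (ZMod 2) (Equiv.Perm (Fin 3)))
            + MonoidAlgebra.of (ZMod 2) (Equiv.Perm (Fin 3)) τ
            + MonoidAlgebra.of (ZMod 2) (Equiv.Perm (Fin 3)) (τ ^ 2)}).ringCon.Quotient)
        ≃+* Matrix (Fin 2) (Fin 2) (ZMod 2)) := by
  classical
  set of2 := MonoidAlgebra.of (ZMod 2) (Equiv.Perm (Fin 3)) with hof
  set H₂ : R2 := 1 + of2 τ + of2 (τ ^ 2) with hH
  set I : TwoSidedIdeal R2 := TwoSidedIdeal.span {H₂} with hI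
  set c := I.ringCon with hc
  have ht3 : τ ^ 3 = 1 := by
    have h := pow_orderOf_eq_one τ
    rwa [hτ.orderOf] at h
  have htne : τ ≠ 1 := by
    intro h
    have := hτ.orderOf
    rw [h, orderOf_one] at this
    exact (by norm_num : (1 : ℕ) ≠ 3) this
  have hPhiH : Φ H₂ = 0 := by
    rw [hH]
    rw [map_add, map_add, map_one, Phi_of, Phi_of]
    exact key τ ht3 htne
  have hkerI : ∀ x : R2, x ∈ I → Φ x = 0 := by
    intro x hx
    have h2 : ({H₂} : Set R2) ⊆ (TwoSidedIdeal.ker Φ.toRingHom : Set R2) := by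
      intro y hy
      rcases Set.mem_singleton_iff.mp hy with rfl
      simpa [TwoSidedIdeal.mem_ker] using hPhiH
    have := TwoSidedIdeal.mem_span_iff.mp hx (TwoSidedIdeal.ker Φ.toRingHom) h2
    simpa [TwoSidedIdeal.mem_ker] using this
  have hresp : ∀ a b : R2, c a b → Φ a = Φ b := by
    intro a b hab
    have h1 : a - b ∈ I := (TwoSidedIdeal.rel_iff I a b).mp hab
    have h2 := hkerI _ h1
    rw [map_sub] at h2
    exact sub_eq_zero.mp h2
  -- the induced ring hom on the quotient
  let bar : c.Quotient →+* M2 :=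
    { toFun := Quotient.lift (Φ : R2 → M2) hresp
      map_one' := map_one Φ
      map_mul' := fun x y => Quotient.inductionOn₂ x y fun a b => map_mul Φ a b
      map_zero' := map_zero Φ
      map_add' := fun x y => Quotient.inductionOn₂ x y fun a b => map_add Φ a b }
  have hbar_mk : ∀ x : R2, bar (c.mk' x) = Φ x := fun _ => rfl
  have hbar_surj : Function.Surjective bar := by
    intro m
    obtain ⟨x, hx⟩ := Phi_surj m
    exact ⟨c.mk' x, hx⟩
  -- cardinality bound: the quotient has at most 16 elements
  set q : R2 →+* c.Quotient := c.mk' with hq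
  have hmemrel : ∀ x y : R2, x - y ∈ I → q x = q y := by
    intro x y h
    exact c.eq.mpr ((TwoSidedIdeal.rel_iff I x y).mpr h)
  set h4 : ZMod 2 × ZMod 2 × ZMod 2 × ZMod 2 → c.Quotient :=
    fun p => q (p.1 • 1 + p.2.1 • of2 τ + p.2.2.1 • of2 s0 + p.2.2.2 • (of2 s0 * of2 τ))
    with hh4
  have hHI : H₂ ∈ I := TwoSidedIdeal.subset_span rfl
  have hrange : ∀ x : R2, q x ∈ Set.range h4 := by
    intro x
    induction x using MonoidAlgebra.induction with
    | zero =>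
      exact ⟨(0, 0, 0, 0), by simp [hh4]⟩
    | single_add g r f _ _ ih =>
      obtain ⟨p, hp⟩ := ih
      have hsing : ∃ p' , h4 p' = q (MonoidAlgebra.single g r) := by
        have hr : r = 0 ∨ r = 1 := by
          fin_cases r
          · exact Or.inl rfl
          · exact Or.inr rfl
        rcases hr with rfl | rfl
        · exact ⟨(0, 0, 0, 0), by simp [hh4]⟩
        · have hofg : (MonoidAlgebra.single g (1 : ZMod 2) : R2) = of2 g := rfl
          rw [hofg]
          rcases enum6 τ ht3 htne g with rfl | rfl | rfl | rfl | rfl | rfl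
          · exact ⟨(1, 0, 0, 0), by simp [hh4, map_one]⟩
          · exact ⟨(0, 1, 0, 0), by simp [hh4]⟩
          · refine ⟨(1, 1, 0, 0), ?_⟩
            simp only [hh4, one_smul, zero_smul, add_zero]
            refine hmemrel _ _ ?_
            rw [show ((1:R2) + of2 τ) - of2 (τ ^ 2) = H₂ by
              rw [sub_eq_add_neg, neg_eq, hH]]
            exact hHI
          · exact ⟨(0, 0, 1, 0), by simp [hh4]⟩
          · exact ⟨(0, 0, 0, 1), by simp [hh4, map_mul]⟩
          · refine ⟨(0, 0, 1, 1), ?_⟩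
            simp only [hh4, one_smul, zero_smul, zero_add]
            refine hmemrel _ _ ?_
            rw [show (of2 s0 + of2 s0 * of2 τ) - of2 (s0 * τ ^ 2) = of2 s0 * H₂ by
              rw [map_mul, sub_eq_add_neg, neg_eq, hH, mul_add, mul_add, mul_one]]
            exact TwoSidedIdeal.mul_mem_left I _ _ hHI
      obtain ⟨p', hp'⟩ := hsing
      refine ⟨p' + p, ?_⟩
      have hadd : h4 (p' + p) = h4 p' + h4 p := by
        simp only [hh4, Prod.fst_add, Prod.snd_add, add_smul, ← map_add]
        congr 1
        abel
      rw [hadd, hp', hp, ← map_add]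
  have hh4_surj : Function.Surjective h4 := by
    intro z
    exact Quotient.inductionOn z fun x => hrange x
  have hcard1 : Nat.card c.Quotient ≤ 16 := by
    have := Nat.card_le_card_of_surjective h4 hh4_surj
    simpa [Nat.card_eq_fintype_card] using this
  have hcardM : Nat.card M2 = 16 := by
    rw [Nat.card_eq_fintype_card]; rfl
  have hfinR : Finite R2 := by
    have : Finite (G →₀ ZMod 2) := Finite.of_fintype _
    exact Finite.of_equiv _ MonoidAlgebra.coeffEquiv.symm
  have hfin : Finite c.Quotient := Quotient.finite _
  have hbij : Function.Bijective bar :=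
    hbar_surj.bijective_of_nat_card_le (by rw [hcardM]; exact hcard1)
  exact ⟨RingEquiv.ofBijective bar hbij⟩
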